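/- Let F, F' ∈ (U(g)⊗U(g))[[t]] be two Drinfel'd twists that coincide up to and including order k in t. Then ∂(F_{k+1} − F'_{k+1}) = 0, where ∂ is the differential ∂ξ = ξ⊗1 + 1⊗ξ − Δ(ξ) extended as a graded derivation to U(g)^{⊗2}, and F_{k+1}, F'_{k+1} are the coefficients of t^{k+1}. -/

import Mathlib

open TensorProduct

/-!
STATEMENT 13: If two Drinfel'd twists `F, F' ∈ (U(g)⊗U(g))[[t]]` coincide up to
and including order `k` in `t`, then `∂(F_{k+1} − F'_{k+1}) = 0`, i.e. setting
`C = F_{k+1} − F'_{k+1}` one has `C⊗1 + (Δ⊗id)C = 1⊗C + (id⊗Δ)C`.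
-/

namespace Stmt13

variable (k : Type*) [Field k] [CharZero k]
  (g : Type*) [LieRing g] [LieAlgebra k g]

local notation "U" => UniversalEnvelopingAlgebra k g

noncomputable def Δ₁ (Δ : U →ₐ[k] U ⊗[k] U) : (U ⊗[k] U) →ₐ[k] (U ⊗[k] U) ⊗[k] U :=
  Algebra.TensorProduct.map Δ (AlgHom.id k U)

noncomputable def Δ₂ (Δ : U →ₐ[k] U ⊗[k] U) : (U ⊗[k] U) →ₐ[k] (U ⊗[k] U) ⊗[k] U :=
  ((Algebra.TensorProduct.assoc k k k U U U).symm).toAlgHom.comp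
    (Algebra.TensorProduct.map (AlgHom.id k U) Δ)

noncomputable def ι₁ : (U ⊗[k] U) →ₐ[k] (U ⊗[k] U) ⊗[k] U :=
  Algebra.TensorProduct.includeLeft

noncomputable def ι₂ : (U ⊗[k] U) →ₐ[k] (U ⊗[k] U) ⊗[k] U :=
  ((Algebra.TensorProduct.assoc k k k U U U).symm).toAlgHom.comp
    Algebra.TensorProduct.includeRight

noncomputable def ε₁ (ε : U →ₐ[k] k) : (U ⊗[k] U) →ₐ[k] U :=
  (Algebra.TensorProduct.lid k U).toAlgHom.comp
    (Algebra.TensorProduct.map ε (AlgHom.id k U))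

noncomputable def ε₂ (ε : U →ₐ[k] k) : (U ⊗[k] U) →ₐ[k] U :=
  (Algebra.TensorProduct.rid k k U).toAlgHom.comp
    (Algebra.TensorProduct.map (AlgHom.id k U) ε)

def IsTwist (Δ : U →ₐ[k] U ⊗[k] U) (ε : U →ₐ[k] k)
    (F : PowerSeries (U ⊗[k] U)) : Prop :=
  IsUnit F ∧
  PowerSeries.map (Δ₁ k g Δ).toRingHom F * PowerSeries.map (ι₁ k g).toRingHom F
    = PowerSeries.map (Δ₂ k g Δ).toRingHom F * PowerSeries.map (ι₂ k g).toRingHom F ∧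
  PowerSeries.map (ε₁ k g ε).toRingHom F = 1 ∧
  PowerSeries.map (ε₂ k g ε).toRingHom F = 1 ∧
  PowerSeries.constantCoeff (R := U ⊗[k] U) F = 1

lemma aux_coeff {A B : Type*} [Ring A] [Ring B] (φ ψ : A →+* B)
    (F F' : PowerSeries A)
    (hF0 : PowerSeries.constantCoeff (R := A) F = 1)
    (hF'0 : PowerSeries.constantCoeff (R := A) F' = 1)
    (K : ℕ) (hco : ∀ i ≤ K, PowerSeries.coeff (R := A) i F = PowerSeries.coeff (R := A) i F') :
    PowerSeries.coeff (R := B) (K + 1) (PowerSeries.map φ F * PowerSeries.map ψ F)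
      - PowerSeries.coeff (R := B) (K + 1) (PowerSeries.map φ F' * PowerSeries.map ψ F')
    = φ (PowerSeries.coeff (R := A) (K + 1) F - PowerSeries.coeff (R := A) (K + 1) F')
      + ψ (PowerSeries.coeff (R := A) (K + 1) F - PowerSeries.coeff (R := A) (K + 1) F') := by
  rw [PowerSeries.coeff_mul, PowerSeries.coeff_mul,
    Finset.Nat.sum_antidiagonal_eq_sum_range_succ_mk,
    Finset.Nat.sum_antidiagonal_eq_sum_range_succ_mk,
    ← Finset.sum_sub_distrib, Finset.sum_range_succ, Finset.sum_range_succ']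
  have hmid : ∀ i ∈ Finset.range K,
      (PowerSeries.coeff (R := B) (i + 1) (PowerSeries.map φ F)
          * PowerSeries.coeff (R := B) (K + 1 - (i + 1)) (PowerSeries.map ψ F)
        - PowerSeries.coeff (R := B) (i + 1) (PowerSeries.map φ F')
          * PowerSeries.coeff (R := B) (K + 1 - (i + 1)) (PowerSeries.map ψ F')) = 0 := by
    intro i hi
    rw [Finset.mem_range] at hi
    simp only [PowerSeries.coeff_map]
    rw [hco (i + 1) (by omega), hco (K + 1 - (i + 1)) (by omega), sub_self]
  rw [Finset.sum_congr rfl hmid, Finset.sum_const_zero, zero_add]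
  simp only [PowerSeries.coeff_map, Nat.sub_zero, Nat.sub_self,
    PowerSeries.coeff_zero_eq_constantCoeff, hF0, hF'0, map_one, one_mul, mul_one,
    map_sub]
  abel

theorem difference_of_twists_is_closed
    (Δ : U →ₐ[k] U ⊗[k] U)
    (hΔ : ∀ x : g, Δ (UniversalEnvelopingAlgebra.ι k x)
        = UniversalEnvelopingAlgebra.ι k x ⊗ₜ[k] 1
          + 1 ⊗ₜ[k] UniversalEnvelopingAlgebra.ι k x)
    (ε : U →ₐ[k] k)
    (hε : ∀ x : g, ε (UniversalEnvelopingAlgebra.ι k x) = 0)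
    (F F' : PowerSeries (U ⊗[k] U))
    (hF : IsTwist k g Δ ε F) (hF' : IsTwist k g Δ ε F')
    (K : ℕ) (hco : ∀ i ≤ K, PowerSeries.coeff (R := U ⊗[k] U) i F
        = PowerSeries.coeff (R := U ⊗[k] U) i F') :
    (let C := PowerSeries.coeff (R := U ⊗[k] U) (K + 1) F
        - PowerSeries.coeff (R := U ⊗[k] U) (K + 1) F'
     ι₁ k g C + Δ₁ k g Δ C = ι₂ k g C + Δ₂ k g Δ C) := by
  intro C
  have h1 := aux_coeff (Δ₁ k g Δ).toRingHom (ι₁ k g).toRingHom F F'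
    hF.2.2.2.2 hF'.2.2.2.2 K hco
  have h2 := aux_coeff (Δ₂ k g Δ).toRingHom (ι₂ k g).toRingHom F F'
    hF.2.2.2.2 hF'.2.2.2.2 K hco
  have e1 := congrArg (PowerSeries.coeff (K + 1)) hF.2.1
  have e2 := congrArg (PowerSeries.coeff (K + 1)) hF'.2.1
  have key : (Δ₁ k g Δ).toRingHom C + (ι₁ k g).toRingHom C
      = (Δ₂ k g Δ).toRingHom C + (ι₂ k g).toRingHom C := by
    rw [← h1, ← h2, e1, e2]
  show ι₁ k g C + Δ₁ k g Δ C = ι₂ k g C + Δ₂ k g Δ C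
  rw [add_comm (ι₁ k g C), add_comm (ι₂ k g C)]
  exact key


end Stmt13
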